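/- Let Ω ⊆ ℝ³ be open with coordinates (x, y, t), and let u : Ω → ℝ be a C² function satisfying u_t (u_x³ − u_y³) u_{xy} + u_y (u_t³ − u_x³) u_{xt} + u_x (u_y³ − u_t³) u_{yt} = 0 on Ω. Then ∂_t ( u_x u_y (u_x³ − u_y³) ) + ∂_y ( u_x u_t (u_t³ − u_x³) ) + ∂_x ( u_y u_t (u_y³ − u_t³) ) = 0 on Ω. -/

import Mathlib

/-- Partial derivative of `f : ℝⁿ → ℝ` in the `i`-th coordinate direction. -/
noncomputable def pd {n : ℕ} (i : Fin n) (f : (Fin n → ℝ) → ℝ) (x : Fin n → ℝ) : ℝ :=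
  fderiv ℝ f x (Pi.single i 1)

/-- `pd` of the flux expression `f·g·(f³−g³)`. -/
lemma pd_flux {f g : (Fin 3 → ℝ) → ℝ} {X : Fin 3 → ℝ} {f' g' : (Fin 3 → ℝ) →L[ℝ] ℝ}
    (hf : HasFDerivAt f f' X) (hg : HasFDerivAt g g' X) (k : Fin 3) :
    pd k (fun Y => f Y * g Y * (f Y ^ 3 - g Y ^ 3)) X =
      f' (Pi.single k 1) * (4 * f X ^ 3 * g X - g X ^ 4)
        + g' (Pi.single k 1) * (f X ^ 4 - 4 * f X * g X ^ 3) := by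
  have hfun : (fun Y => f Y * g Y * (f Y ^ 3 - g Y ^ 3))
      = fun Y => f Y * g Y * (f Y * f Y * f Y - g Y * g Y * g Y) := by
    funext Y; ring
  have H := (hf.mul hg).mul (((hf.mul hf).mul hf).sub ((hg.mul hg).mul hg))
  rw [pd, hfun, (show HasFDerivAt (fun Y => f Y * g Y * (f Y * f Y * f Y - g Y * g Y * g Y)) _ X
    from H).fderiv]
  simp only [ContinuousLinearMap.add_apply, ContinuousLinearMap.smul_apply,
    ContinuousLinearMap.sub_apply, smul_eq_mul, Pi.mul_apply, Pi.sub_apply]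
  ring

/-- `pd` of the flux expression `f·g·(g³−f³)`. -/
lemma pd_flux' {f g : (Fin 3 → ℝ) → ℝ} {X : Fin 3 → ℝ} {f' g' : (Fin 3 → ℝ) →L[ℝ] ℝ}
    (hf : HasFDerivAt f f' X) (hg : HasFDerivAt g g' X) (k : Fin 3) :
    pd k (fun Y => f Y * g Y * (g Y ^ 3 - f Y ^ 3)) X =
      f' (Pi.single k 1) * (g X ^ 4 - 4 * f X ^ 3 * g X)
        + g' (Pi.single k 1) * (4 * f X * g X ^ 3 - f X ^ 4) := by
  have hfun : (fun Y => f Y * g Y * (g Y ^ 3 - f Y ^ 3))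
      = fun Y => f Y * g Y * (g Y * g Y * g Y - f Y * f Y * f Y) := by
    funext Y; ring
  have H := (hf.mul hg).mul (((hg.mul hg).mul hg).sub ((hf.mul hf).mul hf))
  rw [pd, hfun, (show HasFDerivAt (fun Y => f Y * g Y * (g Y * g Y * g Y - f Y * f Y * f Y)) _ X
    from H).fderiv]
  simp only [ContinuousLinearMap.add_apply, ContinuousLinearMap.smul_apply,
    ContinuousLinearMap.sub_apply, smul_eq_mul, Pi.mul_apply, Pi.sub_apply]
  ring

theorem degenerate_elliptic_equation_conservation_law
    (Ω : Set (Fin 3 → ℝ)) (hΩ : IsOpen Ω)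
    (u : (Fin 3 → ℝ) → ℝ) (hu : ContDiffOn ℝ 2 u Ω)
    (heq : ∀ X ∈ Ω,
      pd 2 u X * ((pd 0 u X) ^ 3 - (pd 1 u X) ^ 3) * pd 1 (pd 0 u) X
        + pd 1 u X * ((pd 2 u X) ^ 3 - (pd 0 u X) ^ 3) * pd 2 (pd 0 u) X
        + pd 0 u X * ((pd 1 u X) ^ 3 - (pd 2 u X) ^ 3) * pd 2 (pd 1 u) X = 0) :
    ∀ X ∈ Ω,
      pd 2 (fun Y => pd 0 u Y * pd 1 u Y * ((pd 0 u Y) ^ 3 - (pd 1 u Y) ^ 3)) X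
        + pd 1 (fun Y => pd 0 u Y * pd 2 u Y * ((pd 2 u Y) ^ 3 - (pd 0 u Y) ^ 3)) X
        + pd 0 (fun Y => pd 1 u Y * pd 2 u Y * ((pd 1 u Y) ^ 3 - (pd 2 u Y) ^ 3)) X
        = 0 := by
  intro X hX
  have hXmem : Ω ∈ nhds X := hΩ.mem_nhds hX
  have hu2 : ContDiffAt ℝ 2 u X := hu.contDiffAt hXmem
  have hdf : DifferentiableAt ℝ (fderiv ℝ u) X := by
    have h1 : ContDiffAt ℝ 1 (fderiv ℝ u) X := hu2.fderiv_right (by norm_num)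
    exact h1.differentiableAt one_ne_zero
  set D := fderiv ℝ (fderiv ℝ u) X with hD
  have hpd : ∀ i : Fin 3, HasFDerivAt (pd i u)
      ((ContinuousLinearMap.apply ℝ ℝ (Pi.single i 1)).comp D) X := by
    intro i
    exact (ContinuousLinearMap.apply ℝ ℝ (Pi.single i 1)).hasFDerivAt.comp X hdf.hasFDerivAt
  have hpdd : ∀ i j : Fin 3, pd j (pd i u) X = D (Pi.single j 1) (Pi.single i 1) := by
    intro i j
    rw [pd, (hpd i).fderiv]
    rfl
  have hsymm : ∀ v w, D v w = D w v := hu2.isSymmSndFDerivAt (by simp)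
  have h2 := pd_flux (hpd 0) (hpd 1) 2
  have h1 := pd_flux' (hpd 0) (hpd 2) 1
  have h0 := pd_flux (hpd 1) (hpd 2) 0
  simp only [ContinuousLinearMap.comp_apply, ContinuousLinearMap.apply_apply] at h2 h1 h0
  have heqX := heq X hX
  rw [hpdd 0 1, hpdd 0 2, hpdd 1 2] at heqX
  rw [h2, h1, h0, hsymm (Pi.single 0 1) (Pi.single 2 1), hsymm (Pi.single 0 1) (Pi.single 1 1),
    hsymm (Pi.single 1 1) (Pi.single 2 1)]
  linear_combination (-4 : ℝ) * heqX
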